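/- For any subset S of vertices with |S| ≥ 3 and any integer α with 1 ≤ α ≤ |S| − 2, the clique inequality α·Σ_{i∈S} x_i − Σ_{i<j, i,j∈S} y_{ij} ≤ α(α+1)/2 holds for all binary x ∈ {0,1}^n with y_{ij} = x_i x_j, and hence is valid for the Boolean Quadric Polytope. -/
import Mathlib


/-- Padberg's clique inequality: for `S` with `|S| ≥ 3` and an integer `α` with
`1 ≤ α ≤ |S| − 2`, the inequality `α·∑_{i∈S} x_i − ∑_{i<j ∈ S} x_i x_j ≤ α(α+1)/2`
holds at every binary point. -/
theorem stmt10 (n : ℕ) (S : Finset (Fin n)) (hS : 3 ≤ S.card)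
    (α : ℕ) (hα1 : 1 ≤ α) (hα2 : α ≤ S.card - 2)
    (x : Fin n → ℝ) (hx : ∀ a, x a = 0 ∨ x a = 1) :
    (α : ℝ) * (∑ i ∈ S, x i) - (∑ i ∈ S, ∑ j ∈ S, if i < j then x i * x j else 0)
      ≤ (α : ℝ) * ((α : ℝ) + 1) / 2 := by
  set s : ℝ := ∑ i ∈ S, x i with hs
  set D : ℝ := ∑ i ∈ S, ∑ j ∈ S, if i < j then x i * x j else 0 with hD
  -- key identity: s^2 = 2*D + s
  have hsq : s ^ 2 = 2 * D + s := by
    have h1 : s ^ 2 = ∑ i ∈ S, ∑ j ∈ S, x i * x j := by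
      rw [sq, hs, Finset.sum_mul_sum]
    have hsplit : ∀ i ∈ S, ∑ j ∈ S, x i * x j =
        (∑ j ∈ S, if i < j then x i * x j else 0) +
        (∑ j ∈ S, if j < i then x i * x j else 0) + x i := by
      intro i hi
      have : ∀ j ∈ S, x i * x j =
          (if i < j then x i * x j else 0) +
          ((if j < i then x i * x j else 0) + (if i = j then x i * x j else 0)) := by
        intro j hj
        rcases lt_trichotomy i j with h | h | h
        · simp [h, not_lt_of_gt h, h.ne]
        · simp [h, lt_irrefl]
        · simp [h, not_lt_of_gt h, (ne_of_gt h)]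
      rw [Finset.sum_congr rfl this, Finset.sum_add_distrib, Finset.sum_add_distrib]
      have hdiag : (∑ j ∈ S, if i = j then x i * x j else 0) = x i := by
        rw [Finset.sum_ite_eq S i (fun j => x i * x j)]
        simp only [hi, if_true]
        rcases hx i with h | h <;> rw [h] <;> ring
      rw [hdiag]; ring
    rw [h1, Finset.sum_congr rfl hsplit, Finset.sum_add_distrib, Finset.sum_add_distrib]
    have hswap : (∑ i ∈ S, ∑ j ∈ S, if j < i then x i * x j else 0) = D := by
      rw [hD, Finset.sum_comm]
      exact Finset.sum_congr rfl fun i _ => Finset.sum_congr rfl fun j _ => by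
        split <;> ring_nf
    rw [hswap, ← hD, ← hs]; ring
  -- s is a natural number
  obtain ⟨k, hk⟩ : ∃ k : ℕ, s = (k : ℝ) := by
    classical
    refine ⟨(S.filter (fun i => x i = 1)).card, ?_⟩
    rw [hs]
    have : ∀ i ∈ S, x i = if x i = 1 then (1 : ℝ) else 0 := by
      intro i _
      rcases hx i with h | h <;> simp [h]
    rw [Finset.sum_congr rfl this, Finset.sum_boole]
  rcases le_or_gt k α with h | h
  · have : (k : ℝ) ≤ (α : ℝ) := by exact_mod_cast h
    nlinarith [hsq]
  · have : (α : ℝ) + 1 ≤ (k : ℝ) := by exact_mod_cast h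
    nlinarith [hsq]
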